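/- If u₁ and u₂ are nonzero isotropic vectors of the Hermitian form β spanning distinct 1-dimensional subspaces of F_{q^2}^3, then the 2-dimensional subspace ⟨u₁, u₂⟩ contains exactly q+1 absolute points (1-dimensional subspaces spanned by isotropic vectors). -/

import Mathlib

/-- The Hermitian form `β(u,v) = -x₁x₂^q + y₁z₂^q + z₁y₂^q` on `F_{q²}³`. -/
def herm {K : Type*} [Field K] (q : ℕ) (u v : Fin 3 → K) : K :=
  -(u 0 * v 0 ^ q) + u 1 * v 2 ^ q + u 2 * v 1 ^ q

open Polynomial Module Submodule LinearMap in
private lemma root_set_ncard_le {K : Type*} [Field K] (P : Polynomial K) (hP : P ≠ 0)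
    (s : Set K) (h : ∀ x ∈ s, P.eval x = 0) : s.ncard ≤ P.natDegree := by
  classical
  have hsub : s ⊆ ↑P.roots.toFinset := by
    intro x hx
    simp only [Finset.coe_sort_coe, Multiset.mem_toFinset, Finset.mem_coe, mem_roots, hP,
      ne_eq, not_false_eq_true, true_and, IsRoot.def]
    exact h x hx
  calc s.ncard ≤ (↑P.roots.toFinset : Set K).ncard :=
        Set.ncard_le_ncard hsub (Set.toFinite _)
    _ = P.roots.toFinset.card := Set.ncard_coe_finset _
    _ ≤ Multiset.card P.roots := Multiset.toFinset_card_le _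
    _ ≤ P.natDegree := Polynomial.card_roots' P

open Polynomial Module Submodule LinearMap in
/-- The 2-dimensional subspace spanned by two isotropic vectors spanning distinct
1-dimensional subspaces contains exactly `q + 1` absolute points. -/
theorem card_absolute_points_on_secant
    (p e q : ℕ) (hp : p.Prime) (he : 0 < e) (hq : q = p ^ e)
    (K : Type) [Field K] [Fintype K]
    (hcard : Fintype.card K = q ^ 2)
    (u₁ u₂ : Fin 3 → K) (h1 : u₁ ≠ 0) (h2 : u₂ ≠ 0)
    (hiso1 : herm q u₁ u₁ = 0) (hiso2 : herm q u₂ u₂ = 0)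
    (hdist : Submodule.span K {u₁} ≠ Submodule.span K {u₂}) :
    Nat.card {W : Submodule K (Fin 3 → K) //
        (∃ w : Fin 3 → K, w ≠ 0 ∧ herm q w w = 0 ∧ W = Submodule.span K {w}) ∧
        W ≤ Submodule.span K {u₁, u₂}}
      = q + 1 := by
  classical
  -- ## Setup: characteristic and Frobenius facts
  haveI hfp : Fact p.Prime := ⟨hp⟩
  have hq2 : 2 ≤ q := by
    subst hq; calc 2 ≤ p := hp.two_le
      _ ≤ p ^ e := Nat.le_self_pow he.ne' p
  have hq0 : q ≠ 0 := by omega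
  haveI hcharK : CharP K p := by
    obtain ⟨n, hr, hc⟩ := FiniteField.card K (ringChar K)
    have hpr : p = ringChar K := by
      have hdvd : p ∣ ringChar K ^ (n : ℕ) := by
        rw [← hc, hcard, hq, ← pow_mul]
        exact dvd_pow_self p (by positivity)
      exact (Nat.prime_dvd_prime_iff_eq hp hr).mp (hp.dvd_of_dvd_pow hdvd)
    exact hpr ▸ ringChar.charP K
  have hF : ∀ x y : K, (x + y) ^ q = x ^ q + y ^ q := by
    intro x y; rw [hq]; exact add_pow_char_pow x y p e
  have hN : ∀ x : K, (-x) ^ q = -(x ^ q) := by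
    intro x; rw [neg_eq_neg_one_mul, mul_pow, hq, neg_one_pow_char_pow, neg_one_mul]
  have hQ : ∀ x : K, (x ^ q) ^ q = x := by
    intro x; rw [← pow_mul, ← sq, ← hcard, FiniteField.pow_card]
  have hdeg1 : (X ^ q + X : K[X]).natDegree = q := by
    compute_degree!
    · rw [if_neg (by omega : ¬ 1 = q)]; norm_num
    · omega
  have hdeg2 : (X ^ q - X : K[X]).natDegree = q := by
    compute_degree!
    · rw [if_neg (by omega : ¬ 1 = q)]; norm_num
    · omega
  -- ## Linear independence of `u₁, u₂`
  have hkey : ∀ a b : K, a • u₁ + b • u₂ = 0 → a = 0 ∧ b = 0 := by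
    intro a b hab
    by_cases hb : b = 0
    · subst hb
      rw [zero_smul, add_zero] at hab
      rcases smul_eq_zero.mp hab with h | h
      · exact ⟨h, rfl⟩
      · exact absurd h h1
    · exfalso
      have hu2 : u₂ = (-a / b) • u₁ := by
        funext i
        have hi := congrFun hab i
        simp only [Pi.add_apply, Pi.smul_apply, smul_eq_mul, Pi.zero_apply] at hi
        simp only [Pi.smul_apply, smul_eq_mul]
        field_simp
        linear_combination hi
      have hr : (-a / b) ≠ 0 := by
        intro h0; apply h2; rw [hu2, h0, zero_smul]
      have : Submodule.span K {u₂} = Submodule.span K {u₁} := by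
        rw [hu2, Submodule.span_singleton_smul_eq hr.isUnit]
      exact hdist this.symm
  have hind : LinearIndependent K ![u₁, u₂] := LinearIndependent.pair_iff.mpr hkey
  -- ## Sesquilinear algebra
  have hconj : herm q u₂ u₁ = (herm q u₁ u₂) ^ q := by
    simp only [herm, hF, hN, mul_pow, hQ]
    ring
  have hexp : ∀ a b : K, herm q (a • u₁ + b • u₂) (a • u₁ + b • u₂)
      = a * b ^ q * herm q u₁ u₂ + b * a ^ q * (herm q u₁ u₂) ^ q := by
    intro a b
    simp only [herm, Pi.add_apply, Pi.smul_apply, smul_eq_mul] at *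
    simp only [hF, hN, mul_pow, hQ]
    linear_combination (a * a ^ q) * hiso1 + (b * b ^ q) * hiso2
  -- ## Nondegeneracy: `herm q u₁ u₂ ≠ 0`
  have hc : herm q u₁ u₂ ≠ 0 := by
    intro hc0
    set f : (Fin 3 → K) → ((Fin 3 → K) →ₗ[K] K) := fun u =>
      { toFun := fun v => herm q v u
        map_add' := by intro x y; simp only [herm, Pi.add_apply]; ring
        map_smul' := by intro r x; simp only [herm, Pi.smul_apply, smul_eq_mul,
          RingHom.id_apply]; ring } with hf
    have hf_apply : ∀ u v, f u v = herm q v u := fun _ _ => rfl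
    have hsingle : ∀ u : Fin 3 → K, f u (Pi.single 0 1) = -(u 0 ^ q)
        ∧ f u (Pi.single 1 1) = u 2 ^ q ∧ f u (Pi.single 2 1) = u 1 ^ q := by
      intro u
      refine ⟨?_, ?_, ?_⟩ <;>
        simp [hf_apply, herm, Pi.single_apply]
    obtain ⟨v₀, hv₀⟩ : ∃ v, f u₁ v ≠ 0 := by
      by_contra h
      push_neg at h
      apply h1
      have e0 := h (Pi.single 0 1); rw [(hsingle u₁).1] at e0
      have e1 := h (Pi.single 1 1); rw [(hsingle u₁).2.1] at e1
      have e2 := h (Pi.single 2 1); rw [(hsingle u₁).2.2] at e2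
      have z0 : u₁ 0 = 0 := by
        have := neg_eq_zero.mp e0; exact pow_eq_zero_iff hq0 |>.mp this
      have z2 : u₁ 2 = 0 := pow_eq_zero_iff hq0 |>.mp e1
      have z1 : u₁ 1 = 0 := pow_eq_zero_iff hq0 |>.mp e2
      funext i; fin_cases i <;> simp [z0, z1, z2]
    have hW2 : finrank K ↥(span K {u₁, u₂}) = 2 := by
      have hr : {u₁, u₂} = Set.range ![u₁, u₂] := by
        ext x
        simp [Matrix.range_cons, Matrix.range_empty]
        tauto
      rw [hr, finrank_span_eq_card hind]
      simp
    have hker1 : finrank K ↥(LinearMap.ker (f u₁)) = 2 := by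
      have hrank := LinearMap.finrank_range_add_finrank_ker (f u₁)
      rw [Module.finrank_fin_fun] at hrank
      have hr_top : LinearMap.range (f u₁) = ⊤ := by
        rw [LinearMap.range_eq_top]
        intro x
        exact ⟨(x / f u₁ v₀) • v₀, by rw [map_smul, smul_eq_mul]; field_simp⟩
      rw [hr_top, finrank_top, Module.finrank_self] at hrank
      omega
    have hle1 : span K {u₁, u₂} ≤ LinearMap.ker (f u₁) := by
      rw [span_le]
      rintro x hx
      rcases hx with rfl | rfl
      · rw [SetLike.mem_coe, LinearMap.mem_ker, hf_apply]; exact hiso1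
      · rw [SetLike.mem_coe, LinearMap.mem_ker, hf_apply, hconj, hc0, zero_pow hq0]
    have hle2 : span K {u₁, u₂} ≤ LinearMap.ker (f u₂) := by
      rw [span_le]
      rintro x hx
      rcases hx with rfl | rfl
      · rw [SetLike.mem_coe, LinearMap.mem_ker, hf_apply]; exact hc0
      · rw [SetLike.mem_coe, LinearMap.mem_ker, hf_apply]; exact hiso2
    have hWker : span K {u₁, u₂} = LinearMap.ker (f u₁) :=
      Submodule.eq_of_le_of_finrank_le hle1 (by rw [hW2, hker1])
    set l : K := f u₂ v₀ / f u₁ v₀ with hl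
    set g : (Fin 3 → K) →ₗ[K] K := f u₂ - l • f u₁ with hg
    have hgtop : LinearMap.ker g = ⊤ := by
      have hlt : LinearMap.ker (f u₁) < LinearMap.ker g := by
        rw [lt_iff_le_and_ne]
        constructor
        · intro x hx
          rw [LinearMap.mem_ker] at hx
          have hx2 : f u₂ x = 0 := by
            have : x ∈ span K {u₁, u₂} := by rw [hWker]; exact hx
            exact hle2 this
          rw [LinearMap.mem_ker, hg, LinearMap.sub_apply, LinearMap.smul_apply, smul_eq_mul,
            hx, hx2, mul_zero, sub_zero]
        · intro hEq
          have hv₀g : v₀ ∈ LinearMap.ker g := by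
            rw [LinearMap.mem_ker, hg, LinearMap.sub_apply, LinearMap.smul_apply,
              smul_eq_mul, hl]
            field_simp
            ring
          rw [← hEq] at hv₀g
          exact hv₀ (LinearMap.mem_ker.mp hv₀g)
      have h3 := Submodule.finrank_lt_finrank_of_lt hlt
      have h4 : finrank K ↥(LinearMap.ker g) ≤ 3 := by
        have := Submodule.finrank_le (LinearMap.ker g)
        rwa [Module.finrank_fin_fun] at this
      apply Submodule.eq_top_of_finrank_eq
      rw [Module.finrank_fin_fun]
      omega
    have hall : ∀ v, herm q v u₂ = l * herm q v u₁ := by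
      intro v
      have hv : v ∈ LinearMap.ker g := by rw [hgtop]; trivial
      rw [LinearMap.mem_ker, hg, LinearMap.sub_apply, LinearMap.smul_apply, smul_eq_mul,
        sub_eq_zero, hf_apply, hf_apply] at hv
      exact hv
    have e0 := hall (Pi.single 0 1)
    have e1 := hall (Pi.single 1 1)
    have e2 := hall (Pi.single 2 1)
    rw [← hf_apply, ← hf_apply, (hsingle u₁).1, (hsingle u₂).1] at e0
    rw [← hf_apply, ← hf_apply, (hsingle u₁).2.1, (hsingle u₂).2.1] at e1
    rw [← hf_apply, ← hf_apply, (hsingle u₁).2.2, (hsingle u₂).2.2] at e2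
    have hu21 : u₂ = (l ^ q) • u₁ := by
      funext i
      have hpow : (u₂ i) ^ q = l * (u₁ i) ^ q := by
        fin_cases i
        · show u₂ 0 ^ q = l * u₁ 0 ^ q; linear_combination -e0
        · show u₂ 1 ^ q = l * u₁ 1 ^ q; exact e2
        · show u₂ 2 ^ q = l * u₁ 2 ^ q; exact e1
      have : ((u₂ i) ^ q) ^ q = (l * (u₁ i) ^ q) ^ q := by rw [hpow]
      rw [hQ, mul_pow, hQ] at this
      simpa [Pi.smul_apply, smul_eq_mul] using this
    have hlq : l ^ q ≠ 0 := by
      intro h0; apply h2; rw [hu21, h0, zero_smul]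
    apply hdist
    rw [hu21, Submodule.span_singleton_smul_eq hlq.isUnit]
  -- ## Counting the trace-zero elements
  have hT : ({t : K | t + t ^ q = 0}).ncard = q := by
    set ψ : K →+ K := AddMonoidHom.mk' (fun t => t + t ^ q)
      (fun x y => by simp only [hF]; ring) with hψ
    have hcards : Nat.card K = Nat.card ψ.range * Nat.card ψ.ker := by
      rw [AddSubgroup.card_eq_card_quotient_mul_card_addSubgroup ψ.ker]
      congr 1
      exact Nat.card_congr (QuotientAddGroup.quotientKerEquivRange ψ).toEquiv
    have hP1 : (X ^ q + X : K[X]) ≠ 0 := by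
      intro h; rw [h] at hdeg1; simp at hdeg1; omega
    have hP2 : (X ^ q - X : K[X]) ≠ 0 := by
      intro h; rw [h] at hdeg2; simp at hdeg2; omega
    have hkerset : ((ψ.ker : Set K)) = {t : K | t + t ^ q = 0} := by
      ext t; simp [AddMonoidHom.mem_ker, hψ]
    have hker_card : Nat.card ψ.ker = ((ψ.ker : Set K)).ncard := by
      rw [← Nat.card_coe_set_eq]; rfl
    have hrange_card : Nat.card ψ.range = ((ψ.range : Set K)).ncard := by
      rw [← Nat.card_coe_set_eq]; rfl
    have hker_le : Nat.card ψ.ker ≤ q := by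
      rw [hker_card, ← hdeg1]
      apply root_set_ncard_le _ hP1
      intro x hx
      rw [SetLike.mem_coe, AddMonoidHom.mem_ker] at hx
      simp only [hψ, AddMonoidHom.mk'_apply] at hx
      simp [eval_add, eval_pow, eval_X]
      linear_combination hx
    have hrange_le : Nat.card ψ.range ≤ q := by
      rw [hrange_card, ← hdeg2]
      apply root_set_ncard_le _ hP2
      rintro x ⟨t, rfl⟩
      simp only [hψ, AddMonoidHom.mk'_apply, eval_sub, eval_pow, eval_X]
      rw [hF, hQ]
      ring
    have hKq : Nat.card K = q * q := by rw [Nat.card_eq_fintype_card, hcard, sq]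
    have hker_ge : q ≤ Nat.card ψ.ker := by
      have hmul : q * q ≤ q * Nat.card ψ.ker := by
        calc q * q = Nat.card ψ.range * Nat.card ψ.ker := by rw [← hKq, hcards]
          _ ≤ q * Nat.card ψ.ker := Nat.mul_le_mul_right _ hrange_le
      exact Nat.le_of_mul_le_mul_left hmul (by omega)
    rw [← hkerset, ← hker_card]
    omega
  -- ## The absolute points in the secant line
  set c : K := herm q u₁ u₂ with hcdef
  set S : Set K := {a : K | a * c + (a * c) ^ q = 0} with hSdef
  have hST : {t : K | t + t ^ q = 0} = (fun a : K => a * c) '' S := by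
    ext t
    constructor
    · intro ht
      refine ⟨t * c⁻¹, ?_, by field_simp⟩
      have htc : t * c⁻¹ * c = t := by field_simp
      simp only [hSdef, Set.mem_setOf_eq, htc]
      exact ht
    · rintro ⟨a, ha, rfl⟩
      exact ha
  have hS : S.ncard = q := by
    rw [hST, Set.ncard_image_of_injective _ (mul_left_injective₀ hc)] at hT
    exact hT
  have hnotmem : Submodule.span K {u₁} ∉ (fun a : K => span K {a • u₁ + u₂}) '' S := by
    rintro ⟨a, _, heq⟩
    have hmem : a • u₁ + u₂ ∈ span K {u₁} := by
      rw [← heq]; exact mem_span_singleton_self _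
    obtain ⟨r, hr⟩ := mem_span_singleton.mp hmem
    have h0 : (a - r) • u₁ + (1 : K) • u₂ = 0 := by
      funext i
      have hi := congrFun hr i
      simp only [Pi.add_apply, Pi.smul_apply, smul_eq_mul, Pi.zero_apply] at hi ⊢
      linear_combination -hi
    exact one_ne_zero (hkey _ _ h0).2
  have hinj : Function.Injective (fun a : K => span K {a • u₁ + u₂}) := by
    intro a a' hspan
    simp only at hspan
    have hmem : a' • u₁ + u₂ ∈ span K {a • u₁ + u₂} := by
      rw [hspan]; exact mem_span_singleton_self _
    obtain ⟨r, hr⟩ := mem_span_singleton.mp hmem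
    have h0 : (r * a - a') • u₁ + (r - 1) • u₂ = 0 := by
      funext i
      have hi := congrFun hr i
      simp only [Pi.add_apply, Pi.smul_apply, smul_eq_mul, Pi.zero_apply] at hi ⊢
      linear_combination hi
    obtain ⟨ha, hb⟩ := hkey _ _ h0
    have hr1 : r = 1 := by linear_combination hb
    rw [hr1, one_mul] at ha
    linear_combination ha
  have hAset : {W : Submodule K (Fin 3 → K) |
      (∃ w : Fin 3 → K, w ≠ 0 ∧ herm q w w = 0 ∧ W = Submodule.span K {w}) ∧
      W ≤ Submodule.span K {u₁, u₂}}
      = insert (span K {u₁}) ((fun a : K => span K {a • u₁ + u₂}) '' S) := by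
    ext W
    simp only [Set.mem_setOf_eq, Set.mem_insert_iff, Set.mem_image]
    constructor
    · rintro ⟨⟨w, hw0, hwiso, rfl⟩, hle⟩
      have hwmem : w ∈ span K {u₁, u₂} := hle (mem_span_singleton_self w)
      obtain ⟨a, b, hab⟩ := Submodule.mem_span_pair.mp hwmem
      by_cases hb : b = 0
      · left
        subst hb
        rw [zero_smul, add_zero] at hab
        have ha0 : a ≠ 0 := by
          rintro rfl; rw [zero_smul] at hab; exact hw0 hab.symm
        rw [← hab, Submodule.span_singleton_smul_eq ha0.isUnit]
      · right
        refine ⟨a * b⁻¹, ?_, ?_⟩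
        · have hkey2 : a * b ^ q * c + b * a ^ q * c ^ q = 0 := by
            rw [← hexp a b, hab]; exact hwiso
          simp only [hSdef, Set.mem_setOf_eq]
          rw [mul_pow, mul_pow, inv_pow]
          field_simp
          linear_combination hkey2
        · have hwb : w = b • ((a * b⁻¹) • u₁ + u₂) := by
            funext i
            have hi := congrFun hab i
            simp only [Pi.add_apply, Pi.smul_apply, smul_eq_mul] at hi ⊢
            field_simp
            linear_combination -hi
          show span K {(a * b⁻¹) • u₁ + u₂} = span K {w}
          rw [hwb, Submodule.span_singleton_smul_eq (Ne.isUnit hb)]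
    · rintro (rfl | ⟨a, ha, rfl⟩)
      · refine ⟨⟨u₁, h1, hiso1, rfl⟩, ?_⟩
        rw [span_le, Set.singleton_subset_iff]
        exact subset_span (by simp)
      · have hw0 : a • u₁ + u₂ ≠ 0 := by
          intro h
          have := (hkey a 1 (by rw [one_smul]; exact h)).2
          exact one_ne_zero this
        have hwiso : herm q (a • u₁ + u₂) (a • u₁ + u₂) = 0 := by
          have h := hexp a 1
          rw [one_smul] at h
          rw [h, one_pow, mul_one, one_mul]
          have ha' : a * c + (a * c) ^ q = 0 := ha
          rw [mul_pow] at ha'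
          linear_combination ha'
        refine ⟨⟨a • u₁ + u₂, hw0, hwiso, rfl⟩, ?_⟩
        rw [span_le, Set.singleton_subset_iff, SetLike.mem_coe]
        exact Submodule.mem_span_pair.mpr ⟨a, 1, by rw [one_smul]⟩
  have hcount : Nat.card {W : Submodule K (Fin 3 → K) //
      (∃ w : Fin 3 → K, w ≠ 0 ∧ herm q w w = 0 ∧ W = Submodule.span K {w}) ∧
      W ≤ Submodule.span K {u₁, u₂}}
      = ({W : Submodule K (Fin 3 → K) |
      (∃ w : Fin 3 → K, w ≠ 0 ∧ herm q w w = 0 ∧ W = Submodule.span K {w}) ∧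
      W ≤ Submodule.span K {u₁, u₂}} : Set _).ncard := Nat.card_coe_set_eq _
  rw [hcount, hAset,
    Set.ncard_insert_of_notMem hnotmem ((S.toFinite).image _),
    Set.ncard_image_of_injective _ hinj, hS]
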